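/- For every optimal policy π* and every state s in the winning region W: μ^{π*}_s(Safe) = 1. -/

import Mathlib

open MeasureTheory Set
open scoped ENNReal Classical

variable {S : Type*}

def IsPathMeasure [MeasurableSpace S] (P : S → PMF S) (μ : S → Measure (ℕ → S)) : Prop :=
  (∀ s, IsProbabilityMeasure (μ s)) ∧
    ∀ (s : S) (n : ℕ) (x : ℕ → S),
      μ s {ω | ∀ i ≤ n, ω i = x i} =
        (if x 0 = s then 1 else 0) * ∏ i ∈ Finset.range n, (P (x i)) (x (i + 1))

noncomputable def Rw (Acc : Set S) (γacc rn : ℝ) (s : S) : ℝ :=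
  if s ∈ Acc then (1 - γacc) * rn else 0

noncomputable def Γw (Acc : Set S) (γacc γ : ℝ) (s : S) : ℝ :=
  if s ∈ Acc then γacc else γ

noncomputable def Ret (Acc : Set S) (γacc γ rn : ℝ) (ω : ℕ → S) : ℝ :=
  ∑' t : ℕ, Rw Acc γacc rn (ω (t + 1)) * ∏ k ∈ Finset.range t, Γw Acc γacc γ (ω (k + 1))

noncomputable def Val [MeasurableSpace S] (Acc : Set S) (γacc γ rn : ℝ)
    (μ : S → Measure (ℕ → S)) (s : S) : ℝ :=
  ∫ ω, Ret Acc γacc γ rn ω ∂ (μ s)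

variable {A : S → Type*}

noncomputable def Valp [MeasurableSpace S] (Acc : Set S) (γacc γ rn : ℝ)
    (μ : ((s : S) → A s) → S → Measure (ℕ → S)) (π : (s : S) → A s) (s : S) : ℝ :=
  ∫ ω, Ret Acc γacc γ rn ω ∂ (μ π s)

noncomputable def Qp [MeasurableSpace S] [Fintype S]
    (P : (s : S) → A s → PMF S) (Acc : Set S) (γacc γ rn : ℝ)
    (μ : ((s : S) → A s) → S → Measure (ℕ → S)) (π : (s : S) → A s) (s : S) (a : A s) : ℝ :=
  ∑ s' : S, (P s a s').toReal *
    (Rw Acc γacc rn s' + Γw Acc γacc γ s' * Valp Acc γacc γ rn μ π s')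

noncomputable def Qstar [MeasurableSpace S] [Fintype S]
    (P : (s : S) → A s → PMF S) (Acc : Set S) (γacc γ rn : ℝ)
    (μ : ((s : S) → A s) → S → Measure (ℕ → S)) (s : S) (a : A s) : ℝ :=
  ⨆ π : (s' : S) → A s', Qp P Acc γacc γ rn μ π s a

def WinRegion [MeasurableSpace S] (Acc : Set S)
    (μ : ((s : S) → A s) → S → Measure (ℕ → S)) : Set S :=
  {s | ∃ π : (s' : S) → A s', μ π s {ω | ∀ t, ω t ∉ Acc} = 1}

def IsOptimal [MeasurableSpace S] (Acc : Set S) (γacc γ rn : ℝ)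
    (μ : ((s : S) → A s) → S → Measure (ℕ → S)) (πo : (s : S) → A s) : Prop :=
  ∀ s, Valp Acc γacc γ rn μ πo s = ⨆ π : (s' : S) → A s', Valp Acc γacc γ rn μ π s

section AuxSafety

variable {S : Type*}

private lemma Rw_nonpos {Acc : Set S} {γacc rn : ℝ} (hrn : rn < 0) (hγacc : γacc < 1) (s : S) :
    Rw Acc γacc rn s ≤ 0 := by
  unfold Rw; split
  · exact mul_nonpos_of_nonneg_of_nonpos (by linarith) hrn.le
  · exact le_rfl

private lemma abs_Rw_le {Acc : Set S} {γacc rn : ℝ} (hrn : rn < 0) (hγacc : γacc < 1) (s : S) :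
    |Rw Acc γacc rn s| ≤ (1 - γacc) * (-rn) := by
  unfold Rw; split
  · rw [abs_of_nonpos (mul_nonpos_of_nonneg_of_nonpos (by linarith) hrn.le)]; ring_nf; exact le_rfl
  · simp only [abs_zero]
    exact mul_nonneg (by linarith) (by linarith)

private lemma Γw_pos {Acc : Set S} {γacc γ : ℝ} (hγ : 0 < γ) (hγacc : 0 < γacc) (s : S) :
    0 < Γw Acc γacc γ s := by
  unfold Γw; split <;> assumption

private lemma Γw_le_max {Acc : Set S} {γacc γ : ℝ} (s : S) :
    Γw Acc γacc γ s ≤ max γ γacc := by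
  unfold Γw; split
  · exact le_max_right _ _
  · exact le_max_left _ _

private lemma prod_Γw_le {Acc : Set S} {γacc γ : ℝ} (hγ : 0 < γ) (hγacc : 0 < γacc)
    (ω : ℕ → S) (t : ℕ) :
    ∏ k ∈ Finset.range t, Γw Acc γacc γ (ω (k + 1)) ≤ (max γ γacc) ^ t := by
  calc ∏ k ∈ Finset.range t, Γw Acc γacc γ (ω (k + 1))
      ≤ ∏ _k ∈ Finset.range t, max γ γacc :=
        Finset.prod_le_prod (fun k _ => (Γw_pos hγ hγacc _).le) (fun k _ => Γw_le_max _)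
    _ = (max γ γacc) ^ t := by simp

private lemma abs_term_le {Acc : Set S} {γacc γ rn : ℝ} (hrn : rn < 0)
    (hγ : 0 < γ) (hγacc : 0 < γacc) (hγacc1 : γacc < 1) (ω : ℕ → S) (t : ℕ) :
    |Rw Acc γacc rn (ω (t + 1)) * ∏ k ∈ Finset.range t, Γw Acc γacc γ (ω (k + 1))|
      ≤ (1 - γacc) * (-rn) * (max γ γacc) ^ t := by
  rw [abs_mul]
  have h1 := abs_Rw_le (Acc := Acc) hrn hγacc1 (ω (t + 1))
  have h2 : |∏ k ∈ Finset.range t, Γw Acc γacc γ (ω (k + 1))| ≤ (max γ γacc) ^ t := by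
    rw [abs_of_nonneg (Finset.prod_nonneg fun k _ => (Γw_pos hγ hγacc _).le)]
    exact prod_Γw_le hγ hγacc ω t
  exact mul_le_mul h1 h2 (abs_nonneg _) (mul_nonneg (by linarith) (by linarith))

private lemma summable_term {Acc : Set S} {γacc γ rn : ℝ} (hrn : rn < 0)
    (hγ : 0 < γ ∧ γ < 1) (hγacc : 0 < γacc ∧ γacc < 1) (ω : ℕ → S) :
    Summable (fun t => Rw Acc γacc rn (ω (t + 1)) *
      ∏ k ∈ Finset.range t, Γw Acc γacc γ (ω (k + 1))) := by
  have hmax : (0:ℝ) ≤ max γ γacc := le_trans hγ.1.le (le_max_left _ _)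
  apply Summable.of_norm_bounded (Summable.mul_left ((1 - γacc) * (-rn))
    (summable_geometric_of_lt_one hmax (max_lt hγ.2 hγacc.2)))
  intro t
  exact abs_term_le hrn hγ.1 hγacc.1 hγacc.2 ω t

private lemma term_nonpos {Acc : Set S} {γacc γ rn : ℝ} (hrn : rn < 0)
    (hγ : 0 < γ) (hγacc : 0 < γacc) (hγacc1 : γacc < 1) (ω : ℕ → S) (t : ℕ) :
    Rw Acc γacc rn (ω (t + 1)) * ∏ k ∈ Finset.range t, Γw Acc γacc γ (ω (k + 1)) ≤ 0 :=
  mul_nonpos_of_nonpos_of_nonneg (Rw_nonpos hrn hγacc1 _)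
    (Finset.prod_nonneg fun k _ => (Γw_pos hγ hγacc _).le)

private lemma Ret_nonpos {Acc : Set S} {γacc γ rn : ℝ} (hrn : rn < 0)
    (hγ : 0 < γ ∧ γ < 1) (hγacc : 0 < γacc ∧ γacc < 1) (ω : ℕ → S) :
    Ret Acc γacc γ rn ω ≤ 0 :=
  tsum_nonpos (term_nonpos hrn hγ.1 hγacc.1 hγacc.2 ω)

private lemma Ret_eq_zero_of_safe {Acc : Set S} {γacc γ rn : ℝ} (ω : ℕ → S)
    (h : ∀ t, ω t ∉ Acc) : Ret Acc γacc γ rn ω = 0 := by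
  unfold Ret
  have : ∀ t : ℕ, Rw Acc γacc rn (ω (t + 1)) *
      ∏ k ∈ Finset.range t, Γw Acc γacc γ (ω (k + 1)) = 0 := by
    intro t
    have : Rw Acc γacc rn (ω (t + 1)) = 0 := by unfold Rw; rw [if_neg (h (t + 1))]
    rw [this, zero_mul]
  simp only [this, tsum_zero]

private lemma Ret_neg_of_unsafe {Acc : Set S} {γacc γ rn : ℝ} (hrn : rn < 0)
    (hγ : 0 < γ ∧ γ < 1) (hγacc : 0 < γacc ∧ γacc < 1) (ω : ℕ → S) (t : ℕ)
    (h : ω (t + 1) ∈ Acc) : Ret Acc γacc γ rn ω < 0 := by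
  have hterm : Rw Acc γacc rn (ω (t + 1)) *
      ∏ k ∈ Finset.range t, Γw Acc γacc γ (ω (k + 1)) < 0 := by
    apply mul_neg_of_neg_of_pos
    · unfold Rw; rw [if_pos h]
      exact mul_neg_of_pos_of_neg (by linarith [hγacc.2]) hrn
    · exact Finset.prod_pos fun k _ => Γw_pos hγ.1 hγacc.1 _
  have := Summable.tsum_lt_tsum (f := fun t => Rw Acc γacc rn (ω (t + 1)) *
      ∏ k ∈ Finset.range t, Γw Acc γacc γ (ω (k + 1))) (g := fun _ => (0 : ℝ))
    (fun i => term_nonpos hrn hγ.1 hγacc.1 hγacc.2 ω i) hterm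
    (summable_term hrn hγ hγacc ω) summable_zero
  simpa [Ret] using this

private lemma abs_Ret_le {Acc : Set S} {γacc γ rn : ℝ} (hrn : rn < 0)
    (hγ : 0 < γ ∧ γ < 1) (hγacc : 0 < γacc ∧ γacc < 1) (ω : ℕ → S) :
    |Ret Acc γacc γ rn ω| ≤ (1 - γacc) * (-rn) * (1 - max γ γacc)⁻¹ := by
  have hsum : Summable (fun t => ‖Rw Acc γacc rn (ω (t + 1)) *
      ∏ k ∈ Finset.range t, Γw Acc γacc γ (ω (k + 1))‖) := by
    apply Summable.of_nonneg_of_le (fun t => norm_nonneg _)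
      (fun t => abs_term_le hrn hγ.1 hγacc.1 hγacc.2 ω t)
    exact Summable.mul_left _ (summable_geometric_of_lt_one
      (le_trans hγ.1.le (le_max_left _ _)) (max_lt hγ.2 hγacc.2))
  calc |Ret Acc γacc γ rn ω| ≤ ∑' t, ‖Rw Acc γacc rn (ω (t + 1)) *
        ∏ k ∈ Finset.range t, Γw Acc γacc γ (ω (k + 1))‖ := norm_tsum_le_tsum_norm hsum
    _ ≤ ∑' t : ℕ, (1 - γacc) * (-rn) * (max γ γacc) ^ t := by
        apply Summable.tsum_le_tsum (fun t => abs_term_le hrn hγ.1 hγacc.1 hγacc.2 ω t) hsum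
        exact Summable.mul_left _ (summable_geometric_of_lt_one
          (le_trans hγ.1.le (le_max_left _ _)) (max_lt hγ.2 hγacc.2))
    _ = (1 - γacc) * (-rn) * (1 - max γ γacc)⁻¹ := by
        rw [tsum_mul_left, tsum_geometric_of_lt_one
          (le_trans hγ.1.le (le_max_left _ _)) (max_lt hγ.2 hγacc.2)]

private lemma measurable_Ret [MeasurableSpace S] [MeasurableSingletonClass S] [Countable S]
    {Acc : Set S} {γacc γ rn : ℝ} (hrn : rn < 0)
    (hγ : 0 < γ ∧ γ < 1) (hγacc : 0 < γacc ∧ γacc < 1) :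
    Measurable (Ret Acc γacc γ rn : (ℕ → S) → ℝ) := by
  have hterm : ∀ t : ℕ, Measurable (fun ω : ℕ → S => Rw Acc γacc rn (ω (t + 1)) *
      ∏ k ∈ Finset.range t, Γw Acc γacc γ (ω (k + 1))) := by
    intro t
    apply Measurable.mul
    · exact (measurable_of_countable (Rw Acc γacc rn)).comp (measurable_pi_apply (t + 1))
    · exact Finset.measurable_prod _ fun k _ =>
        (measurable_of_countable (Γw Acc γacc γ)).comp (measurable_pi_apply (k + 1))
  apply measurable_of_tendsto_metrizable (f := fun n ω => ∑ t ∈ Finset.range n,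
    Rw Acc γacc rn (ω (t + 1)) * ∏ k ∈ Finset.range t, Γw Acc γacc γ (ω (k + 1)))
  · exact fun n => Finset.measurable_sum _ fun t _ => hterm t
  · rw [tendsto_pi_nhds]
    intro ω
    exact (summable_term hrn hγ hγacc ω).hasSum.tendsto_sum_nat

end AuxSafety

/-- every optimal policy is almost surely safe from every state of the
winning region. -/
theorem optimal_policy_safe_on_winning_region
    [Fintype S] [Nonempty S] [MeasurableSpace S] [MeasurableSingletonClass S]
    [∀ s, Fintype (A s)] [∀ s, Nonempty (A s)]
    (P : (s : S) → A s → PMF S) (Acc : Set S)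
    (habs : ∀ s ∈ Acc, ∀ a : A s, (P s a).support ⊆ Acc)
    (μ : ((s : S) → A s) → S → Measure (ℕ → S))
    (hμ : ∀ π : (s : S) → A s, IsPathMeasure (fun s => P s (π s)) (μ π))
    (rn γ γacc : ℝ) (hrn : rn < 0) (hγ : 0 < γ ∧ γ < 1) (hγacc : 0 < γacc ∧ γacc < 1)
    (πo : (s : S) → A s) (hopt : IsOptimal Acc γacc γ rn μ πo) :
    ∀ s ∈ WinRegion Acc μ, μ πo s {ω | ∀ t, ω t ∉ Acc} = 1 := by
  intro s hs
  obtain ⟨π, hπ⟩ := hs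
  haveI := (hμ πo).1 s
  haveI := (hμ π).1 s
  have hAcc : MeasurableSet Acc := Acc.toFinite.measurableSet
  have hSafeMeas : MeasurableSet {ω : ℕ → S | ∀ t, ω t ∉ Acc} := by
    have h : {ω : ℕ → S | ∀ t, ω t ∉ Acc} = ⋂ t, (fun ω : ℕ → S => ω t) ⁻¹' Accᶜ := by
      ext ω; simp [Set.mem_iInter]
    rw [h]
    exact MeasurableSet.iInter fun t => (measurable_pi_apply t) hAcc.compl
  have hmeas0 : MeasurableSet {ω : ℕ → S | ω 0 = s} := by
    have h : {ω : ℕ → S | ω 0 = s} = (fun ω : ℕ → S => ω 0) ⁻¹' {s} := by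
      ext ω; simp
    rw [h]
    exact (measurable_pi_apply 0) (measurableSet_singleton s)
  have hstart : ∀ π' : (s' : S) → A s', μ π' s {ω : ℕ → S | ω 0 = s} = 1 := by
    intro π'
    have h := (hμ π').2 s 0 (fun _ => s)
    simp only [Finset.range_zero, Finset.prod_empty, mul_one, if_pos rfl] at h
    have hset : {ω : ℕ → S | ∀ i ≤ 0, ω i = (fun _ => s) i} = {ω : ℕ → S | ω 0 = s} := by
      ext ω
      simp [Nat.le_zero]
    rwa [hset] at h
  have hsnotAcc : s ∉ Acc := by
    intro hsAcc
    have h1 : μ π s {ω : ℕ → S | ω 0 = s} = 1 := hstart π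
    have hsub2 : {ω : ℕ → S | ∀ t, ω t ∉ Acc} ⊆ {ω : ℕ → S | ω 0 = s}ᶜ := by
      intro ω hω h0
      exact hω 0 (h0 ▸ hsAcc)
    have hmono := measure_mono (μ := μ π s) hsub2
    rw [hπ] at hmono
    have hc : μ π s {ω : ℕ → S | ω 0 = s}ᶜ = 0 := by
      rw [measure_compl hmeas0 (measure_ne_top _ _), h1, measure_univ, tsub_self]
    rw [hc] at hmono
    exact absurd hmono (by norm_num)
  -- the witness policy has value 0 at s
  have hValπ : Valp Acc γacc γ rn μ π s = 0 := by
    unfold Valp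
    apply integral_eq_zero_of_ae
    have hae : ∀ᵐ ω ∂ μ π s, ∀ t, ω t ∉ Acc := by
      rw [ae_iff]
      have hc := measure_compl hSafeMeas (measure_ne_top (μ π s) _)
      rw [hπ, measure_univ, tsub_self] at hc
      simpa [Set.compl_setOf] using hc
    filter_upwards [hae] with ω hω
    exact Ret_eq_zero_of_safe ω hω
  have hValNonpos : ∀ π' : (s' : S) → A s', Valp Acc γacc γ rn μ π' s ≤ 0 := by
    intro π'
    exact integral_nonpos fun ω => Ret_nonpos hrn hγ hγacc ω
  have hbdd : BddAbove (Set.range fun π' : (s' : S) → A s' => Valp Acc γacc γ rn μ π' s) :=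
    (Set.finite_range _).bddAbove
  have hsup0 : (⨆ π' : (s' : S) → A s', Valp Acc γacc γ rn μ π' s) = 0 := by
    apply le_antisymm
    · exact ciSup_le fun π' => hValNonpos π'
    · rw [← hValπ]
      exact le_ciSup hbdd π
  have hValπo : Valp Acc γacc γ rn μ πo s = 0 := by rw [hopt s, hsup0]
  -- integrability
  have hmeasRet := measurable_Ret (S := S) (Acc := Acc) hrn hγ hγacc
  have hint : Integrable (Ret Acc γacc γ rn) (μ πo s) := by
    apply (integrable_const ((1 - γacc) * (-rn) * (1 - max γ γacc)⁻¹)).mono'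
      hmeasRet.aestronglyMeasurable
    refine ae_of_all _ fun ω => ?_
    rw [Real.norm_eq_abs]
    exact abs_Ret_le hrn hγ hγacc ω
  -- Ret = 0 a.e. under μ πo s
  have hRet0 : ∀ᵐ ω ∂ μ πo s, Ret Acc γacc γ rn ω = 0 := by
    have hnn : 0 ≤ᵐ[μ πo s] fun ω => -Ret Acc γacc γ rn ω :=
      ae_of_all _ fun ω => neg_nonneg.2 (Ret_nonpos hrn hγ hγacc ω)
    have hz : ∫ ω, -Ret Acc γacc γ rn ω ∂ μ πo s = 0 := by
      rw [integral_neg]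
      unfold Valp at hValπo
      rw [hValπo, neg_zero]
    have := (integral_eq_zero_iff_of_nonneg_ae hnn hint.neg).mp hz
    filter_upwards [this] with ω hω
    simpa [neg_eq_zero] using hω
  have hbad : μ πo s {ω : ℕ → S | ∃ t, ω (t + 1) ∈ Acc} = 0 := by
    apply measure_mono_null _ (ae_iff.mp hRet0)
    intro ω hω
    obtain ⟨t, ht⟩ := hω
    exact ne_of_lt (Ret_neg_of_unsafe hrn hγ hγacc ω t ht)
  have hdiff : μ πo s ({ω : ℕ → S | ω 0 = s} \ {ω : ℕ → S | ∃ t, ω (t + 1) ∈ Acc}) = 1 := by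
    rw [measure_diff_null hbad]
    exact hstart πo
  have hsub : {ω : ℕ → S | ω 0 = s} \ {ω : ℕ → S | ∃ t, ω (t + 1) ∈ Acc}
      ⊆ {ω : ℕ → S | ∀ t, ω t ∉ Acc} := by
    rintro ω ⟨h1, h2⟩ t ht
    cases t with
    | zero => exact hsnotAcc (h1 ▸ ht)
    | succ n => exact h2 ⟨n, ht⟩
  refine le_antisymm prob_le_one ?_
  calc (1 : ℝ≥0∞) = μ πo s ({ω : ℕ → S | ω 0 = s} \ {ω : ℕ → S | ∃ t, ω (t + 1) ∈ Acc}) :=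
        hdiff.symm
    _ ≤ μ πo s {ω : ℕ → S | ∀ t, ω t ∉ Acc} := measure_mono hsub
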